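/- Let F(x) = −(2/3)·x·log(x) + (2/3)·x for x > 0. If 0 < a < 1 < b and F(a) = F(b), then a + b > 2. -/

import Mathlib

noncomputable def Fn : ℝ → ℝ := fun x => -(2 / 3 : ℝ) * x * Real.log x + (2 / 3 : ℝ) * x

lemma Fn_deriv {x : ℝ} (hx : x ≠ 0) :
    HasDerivAt Fn (-(2 / 3) * Real.log x) x := by
  have h1 : HasDerivAt (fun y : ℝ => y * Real.log y) (Real.log x + 1) x := by
    have : HasDerivAt (fun y : ℝ => y * Real.log y) (1 * Real.log x + x * x⁻¹) x :=
      (hasDerivAt_id x).mul (Real.hasDerivAt_log hx)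
    convert this using 1
    field_simp
  have h2 : HasDerivAt (fun y : ℝ => -(2 / 3 : ℝ) * (y * Real.log y) + (2 / 3 : ℝ) * y)
      (-(2 / 3) * (Real.log x + 1) + (2 / 3) * 1) x :=
    (h1.const_mul (-(2 / 3))).add ((hasDerivAt_id x).const_mul (2 / 3))
  have heq : Fn = fun y : ℝ => -(2 / 3 : ℝ) * (y * Real.log y) + (2 / 3 : ℝ) * y := by
    funext y; simp [Fn]; ring
  rw [heq]
  convert h2 using 1
  ring

lemma Fn_anti : StrictAntiOn Fn (Set.Ici (1 : ℝ)) := by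
  apply strictAntiOn_of_deriv_neg (convex_Ici 1)
  · intro x hx
    have hx0 : (0 : ℝ) < x := lt_of_lt_of_le one_pos (Set.mem_Ici.mp hx)
    exact (Fn_deriv hx0.ne').continuousAt.continuousWithinAt
  · intro x hx
    rw [interior_Ici] at hx
    have hx1 : (1 : ℝ) < x := hx
    rw [(Fn_deriv (by linarith : x ≠ 0)).deriv]
    have : 0 < Real.log x := Real.log_pos hx1
    nlinarith

theorem F_equal_values_sum_gt_two (a b : ℝ) (ha0 : 0 < a) (ha1 : a < 1) (hb : 1 < b)
    (hF : -(2 / 3 : ℝ) * a * Real.log a + (2 / 3 : ℝ) * a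
        = -(2 / 3 : ℝ) * b * Real.log b + (2 / 3 : ℝ) * b) :
    2 < a + b := by
  have hFab : Fn a = Fn b := hF
  set g : ℝ → ℝ := fun x => Fn (2 - x) - Fn x with hg
  have hd : ∀ x : ℝ, 0 < x → x < 2 →
      HasDerivAt g ((2 / 3) * Real.log (2 - x) + (2 / 3) * Real.log x) x := by
    intro x hx0 hx2
    have hinner : HasDerivAt (fun y : ℝ => 2 - y) (-1) x := (hasDerivAt_id x).const_sub 2
    have houter : HasDerivAt (fun y : ℝ => Fn (2 - y)) ((-(2 / 3) * Real.log (2 - x)) * (-1)) x :=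
      (Fn_deriv (by linarith : (2 - x) ≠ 0)).comp x hinner
    have : HasDerivAt g (-(2 / 3) * Real.log (2 - x) * -1 - -(2 / 3) * Real.log x) x :=
      houter.sub (Fn_deriv hx0.ne')
    convert this using 1
    ring
  have hganti : StrictAntiOn g (Set.Icc a 1) := by
    apply strictAntiOn_of_deriv_neg (convex_Icc a 1)
    · intro x hx
      have hx0 : 0 < x := lt_of_lt_of_le ha0 hx.1
      have hx2 : x < 2 := by linarith [hx.2]
      exact (hd x hx0 hx2).continuousAt.continuousWithinAt
    · intro x hx
      rw [interior_Icc] at hx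
      have hx0 : 0 < x := lt_trans ha0 hx.1
      have hx1 : x < 1 := hx.2
      rw [(hd x hx0 (by linarith)).deriv]
      have hprod : 0 < x * (2 - x) := by nlinarith
      have hlt1 : x * (2 - x) < 1 := by nlinarith [sq_nonneg (1 - x)]
      have hlog : Real.log x + Real.log (2 - x) < 0 := by
        rw [← Real.log_mul hx0.ne' (by linarith : (2 : ℝ) - x ≠ 0)]
        exact Real.log_neg hprod hlt1
      nlinarith
  have hga : 0 < g a := by
    have h1 : g 1 < g a :=
      hganti (Set.mem_Icc.mpr ⟨le_refl a, ha1.le⟩) (Set.mem_Icc.mpr ⟨ha1.le, le_refl 1⟩) ha1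
    have hg1 : g 1 = 0 := by norm_num [hg]
    linarith
  -- so Fn (2 - a) > Fn a = Fn b
  have hkey : Fn b < Fn (2 - a) := by
    have : Fn a < Fn (2 - a) := by simpa [hg] using hga
    linarith [hFab]
  by_contra hle
  push_neg at hle
  have hble : b ≤ 2 - a := by linarith
  have h2a : (2 - a) ∈ Set.Ici (1 : ℝ) := by simp; linarith
  have hbmem : b ∈ Set.Ici (1 : ℝ) := Set.mem_Ici.mpr hb.le
  rcases lt_or_eq_of_le hble with h | h
  · have := Fn_anti hbmem h2a h
    linarith
  · rw [h] at hkey; linarith
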